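/- Let μ > −1. For all integers k, j ≥ 1, (k+j+μ+1) Q^μ_{k,j}(z,w) = ((k+μ+1)(j+μ+1)/(μ+1)) Q^{μ+1}_{k,j}(z,w) − (kj/(μ+1)) Q^{μ+1}_{k−1,j−1}(z,w); when k = 0 or j = 0 the same identity holds with the last term absent. These are identities of bivariate polynomials in (z,w). -/

import Mathlib

noncomputable def jacobiP (α β : ℝ) (n : ℕ) : Polynomial ℝ :=
  (n.factorial : ℝ)⁻¹ •
    ∑ k ∈ Finset.range (n + 1),
      ((n.choose k : ℝ) * ((ascPochhammer ℝ (n - k)).eval ((k : ℝ) + α + 1)) *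
          ((ascPochhammer ℝ k).eval ((n : ℝ) + α + β + 1))) •
        ((Polynomial.X - 1) * Polynomial.C (2⁻¹ : ℝ)) ^ k

noncomputable def zernikeQ (μ : ℝ) (k j : ℕ) : MvPolynomial (Fin 2) ℂ :=
  if j ≤ k then
    MvPolynomial.C ((((j.factorial : ℝ) / ((ascPochhammer ℝ j).eval (μ + 1)) : ℝ) : ℂ)) *
      MvPolynomial.X 0 ^ (k - j) *
      Polynomial.aeval (2 * MvPolynomial.X 0 * MvPolynomial.X 1 - 1)
        (jacobiP μ ((k - j : ℕ) : ℝ) j)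
  else
    MvPolynomial.C ((((k.factorial : ℝ) / ((ascPochhammer ℝ k).eval (μ + 1)) : ℝ) : ℂ)) *
      MvPolynomial.X 1 ^ (j - k) *
      Polynomial.aeval (2 * MvPolynomial.X 0 * MvPolynomial.X 1 - 1)
        (jacobiP μ ((j - k : ℕ) : ℝ) k)

namespace ZernikeAux

open Polynomial Finset

lemma pchL (n : ℕ) (x : ℝ) :
    (ascPochhammer ℝ (n+1)).eval x = x * (ascPochhammer ℝ n).eval (x+1) := by
  rw [ascPochhammer_succ_left, eval_mul, eval_X, eval_comp, eval_add, eval_X, eval_one]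

lemma pch_shift (n : ℕ) (x : ℝ) :
    x * (ascPochhammer ℝ n).eval (x+1) = (ascPochhammer ℝ n).eval x * (x + n) := by
  rw [← pchL, ascPochhammer_succ_eval]

noncomputable def jc (α β : ℝ) (n i : ℕ) : ℝ :=
  (n.choose i : ℝ) * ((ascPochhammer ℝ (n-i)).eval ((i:ℝ) + α + 1)) *
    ((ascPochhammer ℝ i).eval ((n:ℝ) + α + β + 1))

lemma jacobiP_eq (α β : ℝ) (n : ℕ) : jacobiP α β n =
    (n.factorial : ℝ)⁻¹ • ∑ i ∈ Finset.range (n+1),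
      jc α β n i • ((X - 1) * C (2⁻¹:ℝ))^i := rfl

lemma keyCoeffTop (μ : ℝ) (hμ : -1 < μ) (m j : ℕ) :
    (((m:ℝ)+j+j+μ+1) * ((j.factorial : ℝ) / (ascPochhammer ℝ j).eval (μ+1))) *
        ((j.factorial : ℝ))⁻¹ * jc μ (m:ℝ) j j
      = ((((m:ℝ)+j+μ+1) * ((j:ℝ)+μ+1) / (μ+1)) *
            ((j.factorial : ℝ) / (ascPochhammer ℝ j).eval (μ+1+1))) *
          ((j.factorial : ℝ))⁻¹ * jc (μ+1) (m:ℝ) j j := by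
  have h1 : (0:ℝ) < μ + 1 := by linarith
  have hj0 : (0:ℝ) ≤ (j:ℝ) := Nat.cast_nonneg j
  have hm0 : (0:ℝ) ≤ (m:ℝ) := Nat.cast_nonneg m
  have hX : (0:ℝ) < (j:ℝ) + μ + (m:ℝ) + 1 := by linarith
  have hP : (0:ℝ) < (ascPochhammer ℝ j).eval (μ+1) := ascPochhammer_pos _ _ h1
  have hf : (0:ℝ) < (j.factorial : ℝ) := by positivity
  have hB : (ascPochhammer ℝ j).eval (μ+1+1) =
      (ascPochhammer ℝ j).eval (μ+1) * ((μ+1) + j) / (μ+1) := by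
    rw [← pch_shift]; field_simp
  have hA : (ascPochhammer ℝ j).eval ((j:ℝ) + μ + (m:ℝ) + 1 + 1) =
      (ascPochhammer ℝ j).eval ((j:ℝ) + μ + (m:ℝ) + 1) * (((j:ℝ) + μ + (m:ℝ) + 1) + j)
        / ((j:ℝ) + μ + (m:ℝ) + 1) := by
    rw [← pch_shift]; field_simp
  simp only [jc, Nat.sub_self, ascPochhammer_zero, eval_one, Nat.choose_self, Nat.cast_one]
  have e2 : (j:ℝ) + (μ+1) + (m:ℝ) + 1 = (j:ℝ) + μ + (m:ℝ) + 1 + 1 := by ring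
  rw [e2, hA, hB]
  field_simp
  ring

lemma keyCoeffLow (μ : ℝ) (hμ : -1 < μ) (m i d : ℕ) :
    (((m:ℝ)+(i+d+1:ℕ)+(i+d+1:ℕ)+μ+1) *
          (((i+d+1).factorial : ℝ) / (ascPochhammer ℝ (i+d+1)).eval (μ+1))) *
        (((i+d+1).factorial : ℝ))⁻¹ * jc μ (m:ℝ) (i+d+1) i
      + (((m:ℝ)+(i+d+1:ℕ)) * ((i+d+1:ℕ):ℝ) / (μ+1) *
            (((i+d).factorial : ℝ) / (ascPochhammer ℝ (i+d)).eval (μ+1+1))) *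
          (((i+d).factorial : ℝ))⁻¹ * jc (μ+1) (m:ℝ) (i+d) i
      = ((((m:ℝ)+(i+d+1:ℕ)+μ+1) * (((i+d+1:ℕ):ℝ)+μ+1) / (μ+1)) *
            (((i+d+1).factorial : ℝ) / (ascPochhammer ℝ (i+d+1)).eval (μ+1+1))) *
          (((i+d+1).factorial : ℝ))⁻¹ * jc (μ+1) (m:ℝ) (i+d+1) i := by
  have h1 : (0:ℝ) < μ + 1 := by linarith
  have hi0 : (0:ℝ) ≤ (i:ℝ) := Nat.cast_nonneg i
  have hd0 : (0:ℝ) ≤ (d:ℝ) := Nat.cast_nonneg d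
  have hm0 : (0:ℝ) ≤ (m:ℝ) := Nat.cast_nonneg m
  have hP : (0:ℝ) < (ascPochhammer ℝ (i+d+1)).eval (μ+1) := ascPochhammer_pos _ _ h1
  set X : ℝ := (i:ℝ)+(d:ℝ)+μ+(m:ℝ)+2 with hXdef
  have hX : (0:ℝ) < X := by rw [hXdef]; linarith
  have e1 : i+d+1-i = d+1 := by omega
  have e2 : i+d-i = d := by omega
  have hQ1 : (ascPochhammer ℝ (d+1)).eval ((i:ℝ)+μ+1) =
      ((i:ℝ)+μ+1) * (ascPochhammer ℝ d).eval ((i:ℝ)+μ+1+1) := pchL d _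
  have hQ2 : (ascPochhammer ℝ (d+1)).eval ((i:ℝ)+(μ+1)+1) =
      (ascPochhammer ℝ d).eval ((i:ℝ)+μ+1+1) * ((i:ℝ)+μ+2+d) := by
    have := ascPochhammer_succ_eval d ((i:ℝ)+(μ+1)+1)
    rw [this, show (i:ℝ)+(μ+1)+1 = (i:ℝ)+μ+1+1 by ring]
    ring
  have hQ3 : (ascPochhammer ℝ d).eval ((i:ℝ)+(μ+1)+1) =
      (ascPochhammer ℝ d).eval ((i:ℝ)+μ+1+1) := by
    rw [show (i:ℝ)+(μ+1)+1 = (i:ℝ)+μ+1+1 by ring]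
  have hR2 : (ascPochhammer ℝ i).eval (X+1) =
      (ascPochhammer ℝ i).eval X * (X + i) / X := by
    rw [← pch_shift]; field_simp
  have hPB : (ascPochhammer ℝ (i+d+1)).eval (μ+1+1) =
      (ascPochhammer ℝ (i+d+1)).eval (μ+1) * ((μ+1) + (i+d+1:ℕ)) / (μ+1) := by
    rw [← pch_shift]; field_simp
  have hPS : (ascPochhammer ℝ (i+d)).eval (μ+1+1) =
      (ascPochhammer ℝ (i+d+1)).eval (μ+1) / (μ+1) := by
    rw [show i+d+1 = (i+d)+1 from rfl, pchL]; field_simp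
  have hCn : (i+d+1) * ((i+d).choose i) = ((i+d+1).choose i) * (d+1) := by
    calc (i+d+1) * ((i+d).choose i) = (i+d+1) * ((i+d).choose d) := by
            rw [Nat.choose_symm_add]
      _ = ((i+d+1).choose (d+1)) * (d+1) := Nat.add_one_mul_choose_eq _ _
      _ = ((i+d+1).choose i) * (d+1) := by
            rw [show i+d+1 = d+1+i from by omega, Nat.choose_symm_add]
  have hC : ((i+d).choose i : ℝ) = ((i+d+1).choose i : ℝ) * ((d:ℝ)+1) / ((i:ℝ)+d+1) := by
    have : ((i:ℝ)+d+1) * ((i+d).choose i : ℝ) = ((i+d+1).choose i : ℝ) * ((d:ℝ)+1) := by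
      exact_mod_cast hCn
    field_simp at this ⊢
    linarith [this]
  simp only [jc, e1, e2]
  rw [hQ1, hQ2, hQ3, hPB, hPS, hC]
  rw [show ((i+d+1:ℕ):ℝ)+μ+(m:ℝ)+1 = X by push_cast [hXdef]; ring,
      show ((i+d+1:ℕ):ℝ)+(μ+1)+(m:ℝ)+1 = X+1 by push_cast [hXdef]; ring,
      show ((i+d:ℕ):ℝ)+(μ+1)+(m:ℝ)+1 = X by push_cast [hXdef]; ring]
  rw [hR2]
  have hfs : ((i+d+1).factorial : ℝ) = ((i:ℝ)+d+1) * ((i+d).factorial : ℝ) := by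
    rw [show i+d+1 = (i+d)+1 from rfl, Nat.factorial_succ]; push_cast; ring
  rw [hfs]
  have hf0 : ((i+d).factorial : ℝ) ≠ 0 := by positivity
  have hid1 : ((i:ℝ)+d+1) ≠ 0 := by linarith
  have hP' : (ascPochhammer ℝ (i+d+1)).eval (μ+1) ≠ 0 := ne_of_gt hP
  have hX' : X ≠ 0 := ne_of_gt hX
  have h1' : μ+1 ≠ 0 := ne_of_gt h1
  push_cast
  field_simp
  ring

lemma keyPoly (μ : ℝ) (hμ : -1 < μ) (m j : ℕ) (hj : 1 ≤ j) :
    (((m:ℝ)+(j:ℝ)+(j:ℝ)+μ+1) * ((j.factorial : ℝ) / (ascPochhammer ℝ j).eval (μ+1))) •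
        jacobiP μ (m:ℝ) j
      = ((((m:ℝ)+(j:ℝ)+μ+1) * ((j:ℝ)+μ+1) / (μ+1)) *
            ((j.factorial : ℝ) / (ascPochhammer ℝ j).eval (μ+1+1))) • jacobiP (μ+1) (m:ℝ) j
        - (((m:ℝ)+(j:ℝ)) * (j:ℝ) / (μ+1) *
            (((j-1).factorial : ℝ) / (ascPochhammer ℝ (j-1)).eval (μ+1+1))) •
            jacobiP (μ+1) (m:ℝ) (j-1) := by
  obtain ⟨d0, rfl⟩ : ∃ d0, j = d0 + 1 := ⟨j-1, by omega⟩
  show _ = _ - _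
  simp only [Nat.add_sub_cancel, jacobiP_eq, Finset.smul_sum]
  simp only [smul_smul]
  simp only [← mul_assoc]
  rw [eq_sub_iff_add_eq, Finset.sum_range_succ, Finset.sum_range_succ (n := d0+1)]
  have htop := keyCoeffTop μ hμ m (d0+1)
  have hsum : (∑ i ∈ range (d0+1),
        ((((m:ℝ)+(d0+1:ℕ)+(d0+1:ℕ)+μ+1) *
          (((d0+1).factorial : ℝ) / (ascPochhammer ℝ (d0+1)).eval (μ+1))) *
          (((d0+1).factorial : ℝ))⁻¹ * jc μ (m:ℝ) (d0+1) i) • ((X - 1) * C (2⁻¹:ℝ))^i)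
      + (∑ i ∈ range (d0+1),
        ((((m:ℝ)+(d0+1:ℕ)) * ((d0+1:ℕ):ℝ) / (μ+1) *
          ((d0.factorial : ℝ) / (ascPochhammer ℝ d0).eval (μ+1+1))) *
          ((d0.factorial : ℝ))⁻¹ * jc (μ+1) (m:ℝ) d0 i) • ((X - 1) * C (2⁻¹:ℝ))^i)
      = ∑ i ∈ range (d0+1),
        (((((m:ℝ)+(d0+1:ℕ)+μ+1) * (((d0+1:ℕ):ℝ)+μ+1) / (μ+1)) *
          (((d0+1).factorial : ℝ) / (ascPochhammer ℝ (d0+1)).eval (μ+1+1))) *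
          (((d0+1).factorial : ℝ))⁻¹ * jc (μ+1) (m:ℝ) (d0+1) i) • ((X - 1) * C (2⁻¹:ℝ))^i := by
    rw [← Finset.sum_add_distrib]
    refine Finset.sum_congr rfl fun i hi => ?_
    simp only [Finset.mem_range] at hi
    obtain ⟨d, rfl⟩ : ∃ d, d0 = i + d := ⟨d0 - i, by omega⟩
    rw [← add_smul]
    exact congrArg (· • _) (keyCoeffLow μ hμ m i d)
  have htop2 := congrArg (· • ((X - 1) * C (2⁻¹:ℝ))^(d0+1)) htop
  rw [htop2, add_right_comm, hsum]

open MvPolynomial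

lemma rsmul (r : ℝ) (q : MvPolynomial (Fin 2) ℂ) :
    r • q = MvPolynomial.C ((r:ℂ)) * q := by
  rw [Algebra.smul_def, IsScalarTower.algebraMap_apply ℝ ℂ (MvPolynomial (Fin 2) ℂ),
    MvPolynomial.algebraMap_eq, Complex.coe_algebraMap]

set_option maxHeartbeats 400000 in
lemma main_core (μ : ℝ) (hμ : -1 < μ) (a b : ℕ) (hb : 1 ≤ b) (hba : b ≤ a)
    (Y : MvPolynomial (Fin 2) ℂ) :
    MvPolynomial.C ((((a:ℝ) + (b:ℝ) + μ + 1 : ℝ)) : ℂ) *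
        (MvPolynomial.C ((((b.factorial : ℝ) / ((ascPochhammer ℝ b).eval (μ + 1)) : ℝ) : ℂ)) *
          Y ^ (a - b) *
          Polynomial.aeval (2 * MvPolynomial.X 0 * MvPolynomial.X 1 - 1)
            (jacobiP μ ((a - b : ℕ) : ℝ) b))
      = MvPolynomial.C (((((a:ℝ) + μ + 1) * ((b:ℝ) + μ + 1) / (μ + 1) : ℝ)) : ℂ) *
          (MvPolynomial.C ((((b.factorial : ℝ) / ((ascPochhammer ℝ b).eval (μ + 1 + 1)) : ℝ) : ℂ)) *
            Y ^ (a - b) *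
            Polynomial.aeval (2 * MvPolynomial.X 0 * MvPolynomial.X 1 - 1)
              (jacobiP (μ+1) ((a - b : ℕ) : ℝ) b))
        - MvPolynomial.C ((((a:ℝ) * (b:ℝ) / (μ + 1) : ℝ)) : ℂ) *
          (MvPolynomial.C (((((b-1).factorial : ℝ) / ((ascPochhammer ℝ (b-1)).eval (μ + 1 + 1)) : ℝ) : ℂ)) *
            Y ^ (a - b) *
            Polynomial.aeval (2 * MvPolynomial.X 0 * MvPolynomial.X 1 - 1)
              (jacobiP (μ+1) ((a - b : ℕ) : ℝ) (b-1))) := by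
  have h := keyPoly μ hμ (a - b) b hb
  have h2 := congrArg (Polynomial.aeval
    (2 * MvPolynomial.X (0 : Fin 2) * MvPolynomial.X 1 - 1 : MvPolynomial (Fin 2) ℂ)) h
  simp only [map_sub, map_smul, rsmul] at h2
  have hcast : ((a - b : ℕ) : ℝ) = (a:ℝ) - (b:ℝ) := by
    rw [Nat.cast_sub hba]
  have hs1 : ((a:ℝ) + (b:ℝ) + μ + 1) * ((b.factorial : ℝ) / (ascPochhammer ℝ b).eval (μ + 1))
      = (((a-b:ℕ):ℝ)+(b:ℝ)+(b:ℝ)+μ+1) * ((b.factorial : ℝ) / (ascPochhammer ℝ b).eval (μ+1)) := by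
    rw [hcast]; ring
  have hs2 : ((a:ℝ) + μ + 1) * ((b:ℝ) + μ + 1) / (μ + 1) *
        ((b.factorial : ℝ) / (ascPochhammer ℝ b).eval (μ + 1 + 1))
      = (((a-b:ℕ):ℝ)+(b:ℝ)+μ+1) * ((b:ℝ)+μ+1) / (μ+1) *
        ((b.factorial : ℝ) / (ascPochhammer ℝ b).eval (μ+1+1)) := by
    rw [hcast]; ring
  have hs3 : (a:ℝ) * (b:ℝ) / (μ + 1) *
        (((b-1).factorial : ℝ) / (ascPochhammer ℝ (b-1)).eval (μ + 1 + 1))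
      = (((a-b:ℕ):ℝ)+(b:ℝ)) * (b:ℝ) / (μ+1) *
        (((b-1).factorial : ℝ) / (ascPochhammer ℝ (b-1)).eval (μ+1+1)) := by
    rw [hcast]; ring
  have e1 : MvPolynomial.C ((((a:ℝ) + (b:ℝ) + μ + 1 : ℝ)) : ℂ) *
      MvPolynomial.C ((((b.factorial : ℝ) / ((ascPochhammer ℝ b).eval (μ + 1)) : ℝ) : ℂ))
      = (MvPolynomial.C ((((((a-b:ℕ):ℝ)+(b:ℝ)+(b:ℝ)+μ+1) *
          ((b.factorial : ℝ) / (ascPochhammer ℝ b).eval (μ+1)) : ℝ) : ℂ)) :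
            MvPolynomial (Fin 2) ℂ) := by
    rw [← map_mul, ← Complex.ofReal_mul, hs1]
  have e2 : MvPolynomial.C (((((a:ℝ) + μ + 1) * ((b:ℝ) + μ + 1) / (μ + 1) : ℝ)) : ℂ) *
      MvPolynomial.C ((((b.factorial : ℝ) / ((ascPochhammer ℝ b).eval (μ + 1 + 1)) : ℝ) : ℂ))
      = (MvPolynomial.C ((((((a-b:ℕ):ℝ)+(b:ℝ)+μ+1) * ((b:ℝ)+μ+1) / (μ+1) *
          ((b.factorial : ℝ) / (ascPochhammer ℝ b).eval (μ+1+1)) : ℝ) : ℂ)) :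
            MvPolynomial (Fin 2) ℂ) := by
    rw [← map_mul, ← Complex.ofReal_mul, hs2]
  have e3 : MvPolynomial.C ((((a:ℝ) * (b:ℝ) / (μ + 1) : ℝ)) : ℂ) *
      MvPolynomial.C (((((b-1).factorial : ℝ) / ((ascPochhammer ℝ (b-1)).eval (μ + 1 + 1)) : ℝ) : ℂ))
      = (MvPolynomial.C ((((((a-b:ℕ):ℝ)+(b:ℝ)) * (b:ℝ) / (μ+1) *
          (((b-1).factorial : ℝ) / (ascPochhammer ℝ (b-1)).eval (μ+1+1)) : ℝ) : ℂ)) :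
            MvPolynomial (Fin 2) ℂ) := by
    rw [← map_mul, ← Complex.ofReal_mul, hs3]
  calc MvPolynomial.C ((((a:ℝ) + (b:ℝ) + μ + 1 : ℝ)) : ℂ) *
        (MvPolynomial.C ((((b.factorial : ℝ) / ((ascPochhammer ℝ b).eval (μ + 1)) : ℝ) : ℂ)) *
          Y ^ (a - b) *
          Polynomial.aeval (2 * MvPolynomial.X 0 * MvPolynomial.X 1 - 1)
            (jacobiP μ ((a - b : ℕ) : ℝ) b))
      = Y ^ (a-b) * ((MvPolynomial.C ((((a:ℝ) + (b:ℝ) + μ + 1 : ℝ)) : ℂ) *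
          MvPolynomial.C ((((b.factorial : ℝ) / ((ascPochhammer ℝ b).eval (μ + 1)) : ℝ) : ℂ))) *
          Polynomial.aeval (2 * MvPolynomial.X 0 * MvPolynomial.X 1 - 1)
            (jacobiP μ ((a - b : ℕ) : ℝ) b)) := by ring
    _ = Y ^ (a-b) * (MvPolynomial.C ((((((a-b:ℕ):ℝ)+(b:ℝ)+μ+1) * ((b:ℝ)+μ+1) / (μ+1) *
          ((b.factorial : ℝ) / (ascPochhammer ℝ b).eval (μ+1+1)) : ℝ) : ℂ)) *
          Polynomial.aeval (2 * MvPolynomial.X 0 * MvPolynomial.X 1 - 1)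
            (jacobiP (μ+1) ((a - b : ℕ) : ℝ) b)
        - MvPolynomial.C ((((((a-b:ℕ):ℝ)+(b:ℝ)) * (b:ℝ) / (μ+1) *
          (((b-1).factorial : ℝ) / (ascPochhammer ℝ (b-1)).eval (μ+1+1)) : ℝ) : ℂ)) *
          Polynomial.aeval (2 * MvPolynomial.X 0 * MvPolynomial.X 1 - 1)
            (jacobiP (μ+1) ((a - b : ℕ) : ℝ) (b-1))) := by rw [e1, h2]
    _ = _ := by rw [← e2, ← e3]; ring


lemma jacobiP_zero (α β : ℝ) : jacobiP α β 0 = 1 := by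
  simp [jacobiP]

end ZernikeAux

open MvPolynomial in
theorem zernike_connection (μ : ℝ) (hμ : μ > -1) (k j : ℕ) :
    (1 ≤ k → 1 ≤ j →
      C ((((k : ℝ) + (j : ℝ) + μ + 1 : ℝ)) : ℂ) * zernikeQ μ k j =
        C (((((k : ℝ) + μ + 1) * ((j : ℝ) + μ + 1) / (μ + 1) : ℝ)) : ℂ) *
            zernikeQ (μ + 1) k j -
          C ((((k : ℝ) * (j : ℝ) / (μ + 1) : ℝ)) : ℂ) *
            zernikeQ (μ + 1) (k - 1) (j - 1)) ∧
    (k = 0 ∨ j = 0 →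
      C ((((k : ℝ) + (j : ℝ) + μ + 1 : ℝ)) : ℂ) * zernikeQ μ k j =
        C (((((k : ℝ) + μ + 1) * ((j : ℝ) + μ + 1) / (μ + 1) : ℝ)) : ℂ) *
          zernikeQ (μ + 1) k j) := by
  have hμ1 : (μ:ℝ) + 1 ≠ 0 := by linarith
  constructor
  · intro hk hj
    by_cases hjk : j ≤ k
    · have h1 : j - 1 ≤ k - 1 := by omega
      simp only [zernikeQ, if_pos hjk, if_pos h1]
      rw [show k-1-(j-1) = k-j from by omega]
      exact ZernikeAux.main_core μ hμ k j hj hjk (X 0)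
    · have h1 : ¬ (j - 1 ≤ k - 1) := by omega
      simp only [zernikeQ, if_neg hjk, if_neg h1]
      rw [show j-1-(k-1) = j-k from by omega]
      rw [show (k:ℝ)+(j:ℝ)+μ+1 = (j:ℝ)+(k:ℝ)+μ+1 from by ring,
          show ((k:ℝ)+μ+1)*((j:ℝ)+μ+1)/(μ+1) = ((j:ℝ)+μ+1)*((k:ℝ)+μ+1)/(μ+1) from by ring,
          show (k:ℝ)*(j:ℝ)/(μ+1) = (j:ℝ)*(k:ℝ)/(μ+1) from by ring]
      exact ZernikeAux.main_core μ hμ j k hk (by omega) (X 1)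
  · rintro (rfl | rfl)
    · by_cases hj0 : j = 0
      · subst hj0
        simp only [zernikeQ, le_refl, if_pos, Nat.sub_zero, ZernikeAux.jacobiP_zero,
          map_one, Nat.factorial_zero, Nat.cast_one, ascPochhammer_zero,
          Polynomial.eval_one, Nat.cast_zero, add_zero, zero_add, pow_zero]
        rw [show (μ+1)*(μ+1)/(μ+1) = μ+1 from by rw [mul_div_assoc, div_self hμ1, mul_one]]
      · have h1 : ¬ (j ≤ 0) := by omega
        simp only [zernikeQ, if_neg h1, Nat.sub_zero, ZernikeAux.jacobiP_zero,
          map_one, Nat.factorial_zero, Nat.cast_one, ascPochhammer_zero,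
          Polynomial.eval_one, Nat.cast_zero, zero_add]
        rw [show (μ+1)*((j:ℝ)+μ+1)/(μ+1) = (j:ℝ)+μ+1 from by rw [mul_comm, mul_div_assoc, div_self hμ1, mul_one]]
    · simp only [zernikeQ, Nat.zero_le, if_pos, Nat.sub_zero, ZernikeAux.jacobiP_zero,
        map_one, Nat.factorial_zero, Nat.cast_one, ascPochhammer_zero,
        Polynomial.eval_one, Nat.cast_zero, add_zero]
      rw [show ((k:ℝ)+μ+1)*((0:ℝ)+μ+1)/(μ+1) = (k:ℝ)+μ+1 from by rw [zero_add, mul_div_assoc, div_self hμ1, mul_one]]
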